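/- Fix μ > 0, c > 0 and b ∈ ℕ, and define G : [0,∞) → ℝ by G(λ) = (Σ_{n=0}^{b+1} (λ/μ)^n/(n!)^c) / (Σ_{n=0}^∞ (λ/μ)^n/(n!)^c). Then G is nonincreasing: for all 0 ≤ λ₁ ≤ λ₂ one has G(λ₂) ≤ G(λ₁), and G(0) = 1. -/

import Mathlib

open Filter

private lemma cross_pow_le {x₁ x₂ : ℝ} (h0 : 0 ≤ x₁) (h : x₁ ≤ x₂) {k m : ℕ}
    (hk : k ≤ m) : x₂ ^ k * x₁ ^ m ≤ x₁ ^ k * x₂ ^ m := by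
  obtain ⟨d, rfl⟩ := Nat.exists_eq_add_of_le hk
  have h2 : 0 ≤ x₂ := h0.trans h
  have : x₂ ^ k * x₁ ^ (k + d) = (x₁ * x₂) ^ k * x₁ ^ d := by ring
  rw [this]
  have : x₁ ^ k * x₂ ^ (k + d) = (x₁ * x₂) ^ k * x₂ ^ d := by ring
  rw [this]
  exact mul_le_mul_of_nonneg_left (pow_le_pow_left₀ h0 h d)
    (pow_nonneg (mul_nonneg h0 h2) k)

private lemma div_le_div_of_nonneg_right' {a b c : ℝ} (hc : 0 < c) (h : a ≤ b) :
    a / c ≤ b / c := by gcongr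

private lemma summable_aux (c : ℝ) (hc : 0 < c) (x : ℝ) (hx : 0 ≤ x) :
    Summable (fun n : ℕ => x ^ n / ((n.factorial : ℝ)) ^ c) := by
  rcases eq_or_lt_of_le hx with h0 | hpos
  · apply summable_of_ne_finset_zero (s := {0})
    intro n hn
    simp only [Finset.mem_singleton] at hn
    rw [← h0, zero_pow hn, zero_div]
  · have hfac : ∀ n : ℕ, (0:ℝ) < ((n.factorial : ℝ)) ^ c := fun n =>
      Real.rpow_pos_of_pos (by exact_mod_cast n.factorial_pos) c
    have hfpos : ∀ n : ℕ, (0:ℝ) < x ^ n / ((n.factorial : ℝ)) ^ c := fun n =>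
      div_pos (pow_pos hpos n) (hfac n)
    apply summable_of_ratio_test_tendsto_lt_one (l := 0) one_pos
      (Eventually.of_forall fun n => (hfpos n).ne')
    have key : ∀ n : ℕ, ‖x ^ (n+1) / (((n+1).factorial : ℝ)) ^ c‖ /
        ‖x ^ n / ((n.factorial : ℝ)) ^ c‖ = x / ((n : ℝ) + 1) ^ c := by
      intro n
      rw [Real.norm_of_nonneg (hfpos (n+1)).le, Real.norm_of_nonneg (hfpos n).le]
      have hcast : (((n+1).factorial : ℝ)) = ((n : ℝ) + 1) * (n.factorial : ℝ) := by
        rw [Nat.factorial_succ]; push_cast; ring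
      rw [hcast, Real.mul_rpow (by positivity) (by positivity), pow_succ]
      have h1 : (0:ℝ) < ((n : ℝ) + 1) ^ c := Real.rpow_pos_of_pos (by positivity) c
      field_simp
    rw [show (0:ℝ) = x * 0 by ring]
    apply Tendsto.congr (fun n => (key n).symm)
    simp only [div_eq_mul_inv]
    apply Tendsto.const_mul
    apply Tendsto.inv_tendsto_atTop
    exact (tendsto_rpow_atTop hc).comp
      (tendsto_atTop_add_const_right _ 1 tendsto_natCast_atTop_atTop)

private lemma tsum_pos_aux (c : ℝ) (hc : 0 < c) (x : ℝ) (hx : 0 ≤ x) :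
    (0:ℝ) < ∑' n : ℕ, x ^ n / ((n.factorial : ℝ)) ^ c := by
  have hs := summable_aux c hc x hx
  have h0 : (1:ℝ) = x ^ 0 / ((Nat.factorial 0 : ℝ)) ^ c := by
    simp [Real.one_rpow]
  calc (0:ℝ) < 1 := one_pos
    _ = x ^ 0 / ((Nat.factorial 0 : ℝ)) ^ c := h0
    _ ≤ _ := Summable.le_tsum hs 0 (fun i _ => by positivity)

/-- Fix `μ > 0`, `c > 0`, `b ∈ ℕ` and define
`G(λ) = (∑_{n=0}^{b+1} (λ/μ)^n/(n!)^c) / (∑_{n=0}^∞ (λ/μ)^n/(n!)^c)`.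
Then `G` is nonincreasing on `[0, ∞)` and `G 0 = 1`. -/
theorem G_antitone_on_nonneg (mu c : ℝ) (hmu : 0 < mu) (hc : 0 < c) (b : ℕ)
    (G : ℝ → ℝ)
    (hG : ∀ lam : ℝ, G lam =
      (∑ n ∈ Finset.range (b + 2), (lam / mu) ^ n / ((n.factorial : ℝ)) ^ c) /
        (∑' n : ℕ, (lam / mu) ^ n / ((n.factorial : ℝ)) ^ c)) :
    (∀ lam₁ lam₂ : ℝ, 0 ≤ lam₁ → lam₁ ≤ lam₂ → G lam₂ ≤ G lam₁) ∧ G 0 = 1 := by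
  constructor
  · intro l₁ l₂ h1 h12
    rw [hG, hG]
    set x₁ := l₁ / mu with hx₁def
    set x₂ := l₂ / mu with hx₂def
    have hx1 : 0 ≤ x₁ := div_nonneg h1 hmu.le
    have hx12 : x₁ ≤ x₂ := by
      rw [hx₁def, hx₂def]; gcongr
    have hx2 : 0 ≤ x₂ := hx1.trans hx12
    have hs1 := summable_aux c hc x₁ hx1
    have hs2 := summable_aux c hc x₂ hx2
    have hT1 := tsum_pos_aux c hc x₁ hx1
    have hT2 := tsum_pos_aux c hc x₂ hx2
    rw [div_le_div_iff₀ hT2 hT1, ← Summable.sum_add_tsum_nat_add (b + 2) hs1,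
      ← Summable.sum_add_tsum_nat_add (b + 2) hs2, mul_add, mul_add]
    apply add_le_add (le_of_eq (mul_comm _ _))
    rw [← tsum_mul_left, ← tsum_mul_left]
    apply Summable.tsum_le_tsum _ (((summable_nat_add_iff (b + 2)).mpr hs1).mul_left _)
      (((summable_nat_add_iff (b + 2)).mpr hs2).mul_left _)
    intro n
    have hfac : (0:ℝ) < (((n + (b + 2)).factorial : ℝ)) ^ c :=
      Real.rpow_pos_of_pos (by exact_mod_cast (n + (b + 2)).factorial_pos) c
    rw [mul_div_assoc', mul_div_assoc']
    apply div_le_div_of_nonneg_right' hfac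
    rw [Finset.sum_mul, Finset.sum_mul]
    apply Finset.sum_le_sum
    intro k hk
    have hk' : k ≤ n + (b + 2) := by
      have := Finset.mem_range.mp hk; omega
    have hfk : (0:ℝ) < ((k.factorial : ℝ)) ^ c :=
      Real.rpow_pos_of_pos (by exact_mod_cast k.factorial_pos) c
    rw [div_mul_eq_mul_div, div_mul_eq_mul_div]
    exact div_le_div_of_nonneg_right' hfk (cross_pow_le hx1 hx12 hk')
  · rw [hG]
    have hS : (∑ n ∈ Finset.range (b + 2), ((0:ℝ) / mu) ^ n / ((n.factorial : ℝ)) ^ c) = 1 := by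
      rw [Finset.sum_eq_single 0]
      · simp [Real.one_rpow]
      · intro n _ hn
        simp [zero_div, zero_pow hn]
      · intro h; exact absurd (Finset.mem_range.mpr (by omega)) h
    have hT : (∑' n : ℕ, ((0:ℝ) / mu) ^ n / ((n.factorial : ℝ)) ^ c) = 1 := by
      rw [tsum_eq_single 0]
      · simp [Real.one_rpow]
      · intro n hn
        simp [zero_div, zero_pow hn]
    rw [hS, hT, div_one]
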